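/- arXiv:2201.12298 — 3 statements merged into one kernel-verified Lean document; each statement's English description precedes it below -/
import Mathlib

section
/- Let X be a non-negative random variable with finite positive mean, and let X* be its excess (integrated-tail) random variable, independent of X. Then the Gini coefficient of X equals P(X* ≥ X), i.e., E[|X₁ − X₂|]/(2E[X]) = P(X* ≥ X), where X₁, X₂ are independent copies of X. -/
open MeasureTheory ProbabilityTheory Real Set

/-- The Gini coefficient of a distribution `μ` on `ℝ`:
`E[|X₁ - X₂|] / (2 E[X])` for `X₁, X₂` i.i.d. with law `μ`. -/
noncomputable def gini (μ : Measure ℝ) : ℝ :=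
  (∫ p : ℝ × ℝ, |p.1 - p.2| ∂(μ.prod μ)) / (2 * ∫ x, x ∂μ)

/-- If `X ≥ 0` has law `μ` with finite positive mean, and `ν` is the law of the excess
random variable `X*`, i.e. `P(X* ≥ x) = (1/E[X]) ∫_x^∞ P(X > s) ds`, then taking `X` and `X*`
independent (product measure), `G(X) = P(X* ≥ X)`. -/
theorem gini_eq_prob_excess_ge
    (μ ν : Measure ℝ) [IsProbabilityMeasure μ] [IsProbabilityMeasure ν]
    (hpos : ∀ᵐ x ∂μ, 0 ≤ x)
    (hint : Integrable (fun x => x) μ)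
    (hmean : 0 < ∫ x, x ∂μ)
    (hν : ∀ x : ℝ, 0 ≤ x →
      (ν (Ici x)).toReal = (∫ x, x ∂μ)⁻¹ * ∫ s in Ioi x, (μ (Ioi s)).toReal) :
    gini μ = ((μ.prod ν) {p : ℝ × ℝ | p.1 ≤ p.2}).toReal := by
  have hm0 : (∫ x, x ∂μ) ≠ 0 := ne_of_gt hmean
  -- integrability of the coordinates on the product
  have h1 : Integrable (fun p : ℝ × ℝ => p.1) (μ.prod μ) := by
    have hmap : Measure.map Prod.fst (μ.prod μ) = μ := by simp
    have h' : Integrable (fun x : ℝ => x) (Measure.map Prod.fst (μ.prod μ)) := by rw [hmap]; exact hint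
    exact (integrable_map_measure h'.aestronglyMeasurable measurable_fst.aemeasurable).mp h'
  have h2 : Integrable (fun p : ℝ × ℝ => p.2) (μ.prod μ) := by
    have hmap : Measure.map Prod.snd (μ.prod μ) = μ := by simp
    have h' : Integrable (fun x : ℝ => x) (Measure.map Prod.snd (μ.prod μ)) := by rw [hmap]; exact hint
    exact (integrable_map_measure h'.aestronglyMeasurable measurable_snd.aemeasurable).mp h'
  have hpp1 : Integrable (fun p : ℝ × ℝ => max (p.2 - p.1) 0) (μ.prod μ) := (h2.sub h1).pos_part
  have hpp2 : Integrable (fun p : ℝ × ℝ => max (p.1 - p.2) 0) (μ.prod μ) := (h1.sub h2).pos_part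
  -- tail formula for the inner integral
  have tail : ∀ x : ℝ, ∫ y, max (y - x) 0 ∂μ = ∫ s in Ioi x, (μ (Ioi s)).toReal := by
    intro x
    have hf : Integrable (fun y : ℝ => max (y - x) 0) μ := (hint.sub (integrable_const x)).pos_part
    rw [hf.integral_eq_integral_meas_lt (Filter.Eventually.of_forall fun y => le_max_right _ _)]
    have hset : EqOn (fun t : ℝ => (μ {a : ℝ | t < max (a - x) 0}).toReal)
        (fun t : ℝ => (μ (Ioi (t + x))).toReal) (Ioi 0) := by
      intro t ht
      have hs : {a : ℝ | t < max (a - x) 0} = Ioi (t + x) := by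
        ext a
        simp only [mem_setOf_eq, mem_Ioi, lt_max_iff]
        constructor
        · rintro (h | h)
          · linarith
          · exact absurd h (not_lt.mpr (le_of_lt ht))
        · intro h; left; linarith
      simp only [hs]
    simp only [measureReal_def]
    rw [setIntegral_congr_fun measurableSet_Ioi hset]
    have hemb : MeasurableEmbedding (fun t : ℝ => t + x) :=
      (MeasurableEquiv.addRight x).measurableEmbedding
    have hmp : MeasurePreserving (fun t : ℝ => t + x) volume volume :=
      measurePreserving_add_right volume x
    have := hmp.setIntegral_preimage_emb hemb (fun s => (μ (Ioi s)).toReal) (Ioi x)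
    have hpre : (fun t : ℝ => t + x) ⁻¹' (Ioi x) = Ioi 0 := by
      ext t; simp [mem_Ioi]
    rw [hpre] at this
    exact this
  -- symmetry
  have hswap : ∫ p : ℝ × ℝ, max (p.1 - p.2) 0 ∂(μ.prod μ)
      = ∫ p : ℝ × ℝ, max (p.2 - p.1) 0 ∂(μ.prod μ) := by
    have hm : AEMeasurable (Prod.swap : ℝ × ℝ → ℝ × ℝ) (μ.prod μ) :=
      measurable_swap.aemeasurable
    have hsm : AEStronglyMeasurable (fun p : ℝ × ℝ => max (p.1 - p.2) 0)
        (Measure.map Prod.swap (μ.prod μ)) :=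
      ((measurable_fst.sub measurable_snd).max measurable_const).aestronglyMeasurable
    calc ∫ p : ℝ × ℝ, max (p.1 - p.2) 0 ∂(μ.prod μ)
        = ∫ p : ℝ × ℝ, max (p.1 - p.2) 0 ∂(Measure.map Prod.swap (μ.prod μ)) := by
          rw [Measure.prod_swap]
      _ = ∫ p : ℝ × ℝ, max (p.2 - p.1) 0 ∂(μ.prod μ) := by
          rw [integral_map hm hsm]
          simp only [Prod.fst_swap, Prod.snd_swap]
  -- Fubini
  have hFub : ∫ p : ℝ × ℝ, max (p.2 - p.1) 0 ∂(μ.prod μ)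
      = ∫ x, ∫ y, max (y - x) 0 ∂μ ∂μ := integral_prod _ hpp1
  have key : ∫ p : ℝ × ℝ, |p.1 - p.2| ∂(μ.prod μ)
      = 2 * ∫ x, (∫ s in Ioi x, (μ (Ioi s)).toReal) ∂μ := by
    have habs : (fun p : ℝ × ℝ => |p.1 - p.2|)
        = fun p => max (p.1 - p.2) 0 + max (p.2 - p.1) 0 := by
      funext p
      rcases le_total p.1 p.2 with h | h
      · rw [abs_of_nonpos (by linarith), max_eq_right (by linarith), max_eq_left (by linarith)]
        ring
      · rw [abs_of_nonneg (by linarith), max_eq_left (by linarith), max_eq_right (by linarith)]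
        ring
    rw [habs, integral_add hpp2 hpp1, hswap, hFub]
    simp_rw [tail]
    rw [two_mul]
  -- the right-hand side
  have hmeasle : MeasurableSet {p : ℝ × ℝ | p.1 ≤ p.2} :=
    measurableSet_le measurable_fst measurable_snd
  have hprod : (μ.prod ν) {p : ℝ × ℝ | p.1 ≤ p.2} = ∫⁻ x, ν (Ici x) ∂μ := by
    rw [Measure.prod_apply hmeasle]
    refine lintegral_congr fun x => ?_
    congr 1
  have hanti : Measurable fun x : ℝ => ν (Ici x) :=
    Antitone.measurable fun a b hab => measure_mono (Ici_subset_Ici.mpr hab)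
  have hfin : ∀ᵐ x ∂μ, ν (Ici x) < ⊤ :=
    Filter.Eventually.of_forall fun x => lt_of_le_of_lt (measure_mono (subset_univ _))
      (by simp [measure_univ])
  have hRHS : ((μ.prod ν) {p : ℝ × ℝ | p.1 ≤ p.2}).toReal = ∫ x, (ν (Ici x)).toReal ∂μ := by
    rw [hprod, ← integral_toReal hanti.aemeasurable hfin]
  have hcongr : ∫ x, (ν (Ici x)).toReal ∂μ
      = (∫ x, x ∂μ)⁻¹ * ∫ x, (∫ s in Ioi x, (μ (Ioi s)).toReal) ∂μ := by
    have hae : (fun x : ℝ => (ν (Ici x)).toReal)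
        =ᵐ[μ] fun x => (∫ x, x ∂μ)⁻¹ * ∫ s in Ioi x, (μ (Ioi s)).toReal := by
      filter_upwards [hpos] with x hx
      exact hν x hx
    rw [integral_congr_ae hae]
    exact integral_const_mul _ _
  unfold gini
  rw [key, hRHS, hcongr, mul_div_mul_left _ _ (two_ne_zero), div_eq_inv_mul]
end

section
/- Let X be a random variable taking values in the non-negative integers with finite positive mean, and let X*_d be its discrete excess random variable, independent of X. Then the Gini coefficient of X satisfies G(X) = P(X*_d ≥ X) = Σ_{j=0}^∞ P(X = j) · P(X*_d ≥ j). -/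
open MeasureTheory ProbabilityTheory Real Set
open scoped ENNReal


lemma meas_eq_tsum_ite (μ : Measure ℕ) (s : Set ℕ) [DecidablePred (· ∈ s)] :
    μ s = ∑' i, if i ∈ s then μ {i} else 0 := by
  have h := tsum_measure_preimage_singleton (μ := μ) (s := s) s.to_countable
    (f := id) (fun y _ => (Set.to_countable _).measurableSet)
  simp only [Set.preimage_id] at h
  rw [← h, tsum_subtype s (fun i => μ {i})]
  exact tsum_congr fun i => by simp [Set.indicator_apply]

lemma tsum_ite_and (a b : ℕ) :
    ∑' k : ℕ, (if k < a ∧ b ≤ k then (1:ENNReal) else 0) = ((a - b : ℕ) : ENNReal) := by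
  rw [tsum_eq_sum (s := Finset.Ico b a)
    (fun k hk => by simp only [Finset.mem_Ico] at hk; simp only [ite_eq_right_iff]
                    exact fun ⟨h1, h2⟩ => absurd ⟨h2, h1⟩ hk)]
  trans (∑ _k ∈ Finset.Ico b a, (1:ENNReal))
  · exact Finset.sum_congr rfl (fun k hk => by
      simp only [Finset.mem_Ico] at hk; simp [hk.1, hk.2])
  · simp [Nat.card_Ico]

lemma tsum_ite_lt (a : ℕ) (c : ENNReal) :
    ∑' k : ℕ, (if k < a then c else 0) = a * c := by
  rw [tsum_eq_sum (s := Finset.range a)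
    (fun k hk => by simp only [Finset.mem_range] at hk; simp [hk])]
  trans (∑ _k ∈ Finset.range a, c)
  · exact Finset.sum_congr rfl (fun k hk => by simp [Finset.mem_range.mp hk])
  · simp [mul_comm]

lemma ofReal_abs_sub_nat (a b : ℕ) :
    ENNReal.ofReal |(a:ℝ) - b| = ((a - b : ℕ) : ENNReal) + ((b - a : ℕ) : ENNReal) := by
  rcases le_total a b with h | h
  · rw [abs_sub_comm, abs_of_nonneg (sub_nonneg.2 (by exact_mod_cast h)),
      Nat.sub_eq_zero_of_le h, ← Nat.cast_sub h]
    simp [ENNReal.ofReal_natCast]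
  · rw [abs_of_nonneg (sub_nonneg.2 (by exact_mod_cast h)),
      Nat.sub_eq_zero_of_le h, ← Nat.cast_sub h]
    simp [ENNReal.ofReal_natCast]

lemma ofReal_abs_eq_tsum (a b : ℕ) :
    ENNReal.ofReal |(a:ℝ) - b| =
      ∑' k : ℕ, ((if k < a ∧ b ≤ k then (1:ENNReal) else 0) +
                 (if k < b ∧ a ≤ k then (1:ENNReal) else 0)) := by
  rw [ENNReal.tsum_add, tsum_ite_and, tsum_ite_and, ofReal_abs_sub_nat]


/-- For an `ℕ`-valued `X` with law `μ` and finite positive mean, with `X*_d` its discrete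
excess variable (law `νd`, `P(X*_d = x) = P(X > x)/E[X]`) independent of `X`:
`G(X) = P(X*_d ≥ X) = Σ_j P(X = j) P(X*_d ≥ j)`. -/
theorem gini_eq_prob_discreteExcess_ge
    (μ : Measure ℕ) [IsProbabilityMeasure μ]
    (νd : Measure ℕ) [IsProbabilityMeasure νd]
    (hint : Integrable (fun n : ℕ => (n : ℝ)) μ)
    (hmean : 0 < ∫ n, (n : ℝ) ∂μ)
    (hνd : ∀ x : ℕ, (νd {x}).toReal = (μ (Ioi x)).toReal / ∫ n, (n : ℝ) ∂μ) :
    gini (μ.map (fun n : ℕ => (n : ℝ))) = ((μ.prod νd) {p : ℕ × ℕ | p.1 ≤ p.2}).toReal ∧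
    ((μ.prod νd) {p : ℕ × ℕ | p.1 ≤ p.2}).toReal =
      ∑' j : ℕ, (μ {j}).toReal * (νd (Ici j)).toReal := by
  classical
  set m := ∫ n, (n:ℝ) ∂μ with hm_def
  set M := ENNReal.ofReal m with hM_def
  have hM0 : M ≠ 0 := (ENNReal.ofReal_pos.2 hmean).ne'
  have hMtop : M ≠ ⊤ := ENNReal.ofReal_ne_top
  set pf : ℕ → ENNReal := fun i => μ {i} with hpf_def
  set q : ℕ → ENNReal := fun k => μ (Ioi k) with hq_def
  set r : ℕ → ENNReal := fun k => μ (Iic k) with hr_def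
  set S := ∑' k, q k * r k with hS_def
  have hq : ∀ k, q k = ∑' i, if k < i then pf i else 0 := by
    intro k
    show μ (Ioi k) = _
    rw [meas_eq_tsum_ite μ (Ioi k)]
    exact tsum_congr fun i => by simp [Set.mem_Ioi, hpf_def]
  have hr : ∀ k, r k = ∑' i, if i ≤ k then pf i else 0 := by
    intro k
    show μ (Iic k) = _
    rw [meas_eq_tsum_ite μ (Iic k)]
    exact tsum_congr fun i => by simp [Set.mem_Iic, hpf_def]
  -- finiteness of S
  have hSum_q : ∑' k, q k = ∑' i, ((i : ℕ) : ENNReal) * pf i := by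
    calc ∑' k, q k = ∑' k, ∑' i, (if k < i then pf i else 0) := by
          exact tsum_congr hq
      _ = ∑' i, ∑' k, (if k < i then pf i else 0) := ENNReal.tsum_comm
      _ = ∑' i, ((i : ℕ) : ENNReal) * pf i := tsum_congr fun i => tsum_ite_lt i (pf i)
  have hlint : ∑' i, ((i : ℕ) : ENNReal) * pf i = ∫⁻ i, (i : ENNReal) ∂μ := by
    rw [lintegral_countable']
  have hfin : ∫⁻ i, (i : ENNReal) ∂μ < ⊤ := by
    have h2 := hint.2
    rw [hasFiniteIntegral_iff_ofReal (Filter.Eventually.of_forall fun n => Nat.cast_nonneg n)] at h2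
    simpa [ENNReal.ofReal_natCast] using h2
  have hS_ne_top : S ≠ ⊤ := by
    refine ne_of_lt (lt_of_le_of_lt (Summable.tsum_le_tsum (fun k => ?_) ENNReal.summable
      ENNReal.summable) (by rw [hSum_q, hlint]; exact hfin))
    calc q k * r k ≤ q k * 1 := mul_le_mul_right prob_le_one _
      _ = q k := mul_one _
  have hnu : ∀ x, νd {x} = q x * M⁻¹ := by
    intro x
    have hfin1 : νd {x} ≠ ⊤ := measure_ne_top _ _
    have hfin2 : q x * M⁻¹ ≠ ⊤ :=
      ENNReal.mul_ne_top (measure_ne_top _ _) (ENNReal.inv_ne_top.2 hM0)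
    rw [← ENNReal.toReal_eq_toReal_iff' hfin1 hfin2, hνd x, ENNReal.toReal_mul,
      ENNReal.toReal_inv, hM_def, ENNReal.toReal_ofReal hmean.le, div_eq_mul_inv]
  have hnuIci : ∀ j, νd (Ici j) = (∑' x, if j ≤ x then q x else 0) * M⁻¹ := by
    intro j
    rw [meas_eq_tsum_ite νd (Ici j), ← ENNReal.tsum_mul_right]
    exact tsum_congr fun x => by by_cases h : j ≤ x <;> simp [h, Set.mem_Ici, hnu]
  have hmeasLE : MeasurableSet {p : ℕ × ℕ | p.1 ≤ p.2} := (Set.to_countable _).measurableSet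
  have hP : (μ.prod νd) {p : ℕ × ℕ | p.1 ≤ p.2} = ∑' i, νd (Ici i) * pf i := by
    rw [Measure.prod_apply hmeasLE]
    have h1 : ∀ i : ℕ, (Prod.mk i ⁻¹' {p : ℕ × ℕ | p.1 ≤ p.2}) = Ici i := fun i => rfl
    simp_rw [h1]
    exact lintegral_countable' _
  have hP2 : (μ.prod νd) {p : ℕ × ℕ | p.1 ≤ p.2} = S * M⁻¹ := by
    rw [hP]
    calc ∑' i, νd (Ici i) * pf i
        = ∑' i, ∑' x, ((if i ≤ x then q x else 0) * (M⁻¹ * pf i)) := by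
          refine tsum_congr fun i => ?_
          rw [hnuIci i, mul_assoc, ← ENNReal.tsum_mul_right]
      _ = ∑' x, ∑' i, ((if i ≤ x then q x else 0) * (M⁻¹ * pf i)) := ENNReal.tsum_comm
      _ = ∑' x, (q x * M⁻¹) * r x := by
          refine tsum_congr fun x => ?_
          have h2 : ∀ i : ℕ, (if i ≤ x then q x else 0) * (M⁻¹ * pf i)
              = (q x * M⁻¹) * (if i ≤ x then pf i else 0) := by
            intro i
            by_cases h : i ≤ x <;> simp [h] <;> ring
          rw [tsum_congr h2, ENNReal.tsum_mul_left, ← hr x]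
      _ = S * M⁻¹ := by
          rw [hS_def, ← ENNReal.tsum_mul_right]
          exact tsum_congr fun x => by ring
  have hsingle : ∀ a : ℕ × ℕ, (μ.prod μ) {a} = pf a.1 * pf a.2 := by
    intro a
    rw [show ({a} : Set (ℕ × ℕ)) = {a.1} ×ˢ {a.2} from (Set.singleton_prod_singleton).symm,
      Measure.prod_prod]
  have hT : ∫⁻ a : ℕ × ℕ, ENNReal.ofReal |(a.1 : ℝ) - a.2| ∂(μ.prod μ) = 2 * S := by
    rw [lintegral_countable']
    calc ∑' a : ℕ × ℕ, ENNReal.ofReal |(a.1 : ℝ) - a.2| * (μ.prod μ) {a}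
        = ∑' (i : ℕ) (j : ℕ), ENNReal.ofReal |(i : ℝ) - j| * (pf i * pf j) := by
          rw [ENNReal.tsum_prod']
          exact tsum_congr fun i => tsum_congr fun j => by rw [hsingle (i, j)]
      _ = ∑' (i : ℕ) (j : ℕ) (k : ℕ), (((if k < i ∧ j ≤ k then (1:ENNReal) else 0)
            + (if k < j ∧ i ≤ k then (1:ENNReal) else 0)) * (pf i * pf j)) := by
          refine tsum_congr fun i => tsum_congr fun j => ?_
          rw [ofReal_abs_eq_tsum, ← ENNReal.tsum_mul_right]
      _ = ∑' (i : ℕ) (k : ℕ) (j : ℕ), (((if k < i ∧ j ≤ k then (1:ENNReal) else 0)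
            + (if k < j ∧ i ≤ k then (1:ENNReal) else 0)) * (pf i * pf j)) :=
          tsum_congr fun i => ENNReal.tsum_comm
      _ = ∑' (k : ℕ) (i : ℕ) (j : ℕ), (((if k < i ∧ j ≤ k then (1:ENNReal) else 0)
            + (if k < j ∧ i ≤ k then (1:ENNReal) else 0)) * (pf i * pf j)) :=
          ENNReal.tsum_comm
      _ = ∑' k, (q k * r k + r k * q k) := by
          refine tsum_congr fun k => ?_
          have hsplit : ∀ i j : ℕ, (((if k < i ∧ j ≤ k then (1:ENNReal) else 0)
              + (if k < j ∧ i ≤ k then (1:ENNReal) else 0)) * (pf i * pf j))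
              = (if k < i then pf i else 0) * (if j ≤ k then pf j else 0)
                + (if i ≤ k then pf i else 0) * (if k < j then pf j else 0) := by
            intro i j
            simp only [← not_le]
            by_cases h1 : i ≤ k <;> by_cases h2 : j ≤ k <;> simp [h1, h2] <;> ring
          calc ∑' (i : ℕ) (j : ℕ), (((if k < i ∧ j ≤ k then (1:ENNReal) else 0)
                + (if k < j ∧ i ≤ k then (1:ENNReal) else 0)) * (pf i * pf j))
              = ∑' i, ((if k < i then pf i else 0) * r k
                  + (if i ≤ k then pf i else 0) * q k) := by
                refine tsum_congr fun i => ?_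
                rw [tsum_congr (hsplit i), ENNReal.tsum_add, ENNReal.tsum_mul_left,
                  ENNReal.tsum_mul_left, ← hr k, ← hq k]
            _ = q k * r k + r k * q k := by
                rw [ENNReal.tsum_add, ENNReal.tsum_mul_right, ENNReal.tsum_mul_right,
                  ← hq k, ← hr k]
      _ = 2 * S := by
          have h3 : ∑' k, r k * q k = S := tsum_congr fun k => mul_comm _ _
          rw [ENNReal.tsum_add, h3, ← hS_def, two_mul]
  have hc : Measurable (fun n : ℕ => (n : ℝ)) := measurable_from_top
  have habs : Measurable (fun a : ℕ × ℕ => |(a.1 : ℝ) - a.2|) :=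
    ((hc.comp measurable_fst).sub (hc.comp measurable_snd)).abs
  have hnum : ∫ x : ℝ × ℝ, |x.1 - x.2|
      ∂((μ.map (fun n : ℕ => (n : ℝ))).prod (μ.map (fun n : ℕ => (n : ℝ)))) = (2 * S).toReal := by
    rw [Measure.map_prod_map μ μ hc hc,
      integral_map (f := fun x : ℝ × ℝ => |x.1 - x.2|) (hc.prodMap hc).aemeasurable
        ((continuous_fst.sub continuous_snd).abs).aestronglyMeasurable]
    simp only [Prod.map]
    rw [integral_eq_lintegral_of_nonneg_ae
      (Filter.Eventually.of_forall fun a => abs_nonneg _) habs.aestronglyMeasurable, hT]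
  have hden : ∫ x, x ∂(μ.map (fun n : ℕ => (n : ℝ))) = m := by
    rw [hm_def, integral_map (f := fun x : ℝ => x) hc.aemeasurable aestronglyMeasurable_id]
  constructor
  · unfold gini
    rw [hnum, hden, hP2, ENNReal.toReal_mul, ENNReal.toReal_mul, ENNReal.toReal_inv, hM_def,
      ENNReal.toReal_ofReal hmean.le, ENNReal.toReal_ofNat,
      mul_div_mul_left _ _ (two_ne_zero), div_eq_mul_inv]
  · rw [hP, ENNReal.tsum_toReal_eq
      (fun i => ENNReal.mul_ne_top (measure_ne_top _ _) (measure_ne_top _ _))]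
    exact tsum_congr fun i => by rw [ENNReal.toReal_mul, mul_comm]
end

section
/- Let X_k ~ Poisson(Gamma(k, λ)) with λ > 0 fixed, and let X*_{k,d} denote its discrete excess random variable. Then for each fixed j ≥ 1, as k → 0, P(X*_{k,d} ≥ j) converges to d*_j = (1/(λ+1))^j − j·λ·Σ_{n=j}^∞ (1/(λ+1))^{n+1}/(n+1). -/
open MeasureTheory ProbabilityTheory Real Set Filter

private lemma aux_meas_Ici (ν : Measure ℕ) [IsProbabilityMeasure ν] (j : ℕ) :
    (ν (Ici j)).toReal = 1 - ∑ x ∈ Finset.range j, (ν {x}).toReal := by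
  have h1 : ν (Set.Iio j) = ∑ x ∈ Finset.range j, ν {x} := by
    rw [show Set.Iio j = ⋃ x ∈ Finset.range j, {x} by ext m; simp]
    rw [measure_biUnion_finset ?_ (fun _ _ => measurableSet_singleton _)]
    · intro a _ b _ hab; simp [Set.disjoint_singleton, hab]
  have h2 : ν (Ici j) = 1 - ν (Set.Iio j) := by
    rw [← Set.compl_Iio, prob_compl_eq_one_sub measurableSet_Iio]
  rw [h2, ENNReal.toReal_sub_of_le prob_le_one ENNReal.one_ne_top, ENNReal.toReal_one, h1,
    ENNReal.toReal_sum (fun _ _ => measure_ne_top _ _)]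

private lemma aux_ident (l q L : ℝ) (hq : q * (l + 1) = 1) :
    ∀ j : ℕ, 1 - l * ∑ x ∈ Finset.range j, (L - ∑ i ∈ Finset.range x, q^(i+1)/(i+1)) =
      q ^ j - j * l * (L - ∑ i ∈ Finset.range j, q^(i+1)/(i+1)) := by
  intro j
  induction j with
  | zero => simp
  | succ n ih =>
    rw [Finset.sum_range_succ, mul_add, ← sub_sub, ih, Finset.sum_range_succ]
    have hn : ((n:ℝ)+1) ≠ 0 := by positivity
    have hc : ((n:ℝ)+1) * (q^(n+1)/((n:ℝ)+1)) = q^(n+1) := mul_div_cancel₀ _ hn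
    push_cast
    linear_combination (-(q^n))*hq - l*hc

private lemma aux_div (G A Q c g k : ℝ) (hc : c ≠ 0) (hk : k ≠ 0) (hg : g ≠ 0) :
    G / (c * g) * A * Q / k = G / (k * g) * A * (Q / c) := by
  field_simp
  try left

/-- For the Poisson–Gamma (negative binomial) family `X_k ~ Poisson(Gamma(k, λ))` with
discrete excess variable `X*_{k,d}` (law `ν k`, `P(X*_{k,d} = x) = P(X_k > x)/(k/λ)`), and
fixed `j ≥ 1`: as `k → 0⁺`, `P(X*_{k,d} ≥ j)` converges to
`d*_j = (1/(λ+1))^j - j λ Σ_{n=j}^∞ (1/(λ+1))^{n+1}/(n+1)`. -/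
theorem negBinomial_discreteExcess_asymptotic
    (l : ℝ) (hl : 0 < l)
    (μ : ℝ → Measure ℕ) [∀ k, IsProbabilityMeasure (μ k)]
    (hμ : ∀ k : ℝ, 0 < k → ∀ j : ℕ, ((μ k) {j}).toReal =
      Real.Gamma (k + j) / ((j.factorial : ℝ) * Real.Gamma k) *
        (l / (l + 1)) ^ k * (1 / (l + 1)) ^ j)
    (ν : ℝ → Measure ℕ) [∀ k, IsProbabilityMeasure (ν k)]
    (hν : ∀ k : ℝ, 0 < k → ∀ x : ℕ, ((ν k) {x}).toReal = ((μ k) (Ioi x)).toReal / (k / l))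
    (j : ℕ) (hj : 1 ≤ j) :
    Tendsto (fun k : ℝ => ((ν k) (Ici j)).toReal) (nhdsWithin 0 (Ioi 0))
      (nhds ((1 / (l + 1)) ^ j -
        (j : ℝ) * l * ∑' n : ℕ, (1 / (l + 1)) ^ (j + n + 1) / (j + n + 1))) := by
  have hl1 : (0:ℝ) < l + 1 := by linarith
  set q : ℝ := 1/(l+1) with hq_def
  set a : ℝ := l/(l+1) with ha_def
  have ha0 : 0 < a := div_pos hl hl1
  have hq0 : 0 < q := by positivity
  have hq1 : q < 1 := by rw [hq_def, div_lt_one hl1]; linarith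
  have haq : 1 - q = a := by rw [hq_def, ha_def]; field_simp; ring
  have hqa : q * (l + 1) = 1 := by rw [hq_def]; field_simp
  set L : ℝ := -Real.log a with hL_def
  set S : ℕ → ℝ := fun x => ∑ i ∈ Finset.range x, q^(i+1)/((i:ℝ)+1) with hS_def
  -- the log series and its tail
  have hL : HasSum (fun n : ℕ => q^(n+1)/((n:ℝ)+1)) L := by
    have := Real.hasSum_pow_div_log_of_abs_lt_one (x := q)
      (abs_lt.2 ⟨by linarith, hq1⟩)
    rwa [haq] at this
  have hT : HasSum (fun n : ℕ => q^(j+n+1)/((j:ℝ)+(n:ℝ)+1)) (L - S j) := by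
    have h1 : HasSum (fun n : ℕ => q^((n+j)+1)/(((n+j:ℕ):ℝ)+1)) (L - S j) :=
      (hasSum_nat_add_iff (f := fun n : ℕ => q^(n+1)/((n:ℝ)+1)) j).2 (by
        simpa [hS_def] using hL)
    refine h1.congr_fun fun n => ?_
    congr 1
    · congr 1; omega
    · push_cast; ring
  have htsum : ∑' n : ℕ, q ^ (j + n + 1) / ((j:ℝ) + (n:ℝ) + 1) = L - S j := hT.tsum_eq
  rw [htsum, ← aux_ident l q L hqa j]
  -- limit of (1 - a^k)/k
  have lim1 : Tendsto (fun k : ℝ => (1 - a ^ k) / k) (nhdsWithin 0 (Ioi 0)) (nhds L) := by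
    have hd : HasDerivAt (fun k : ℝ => Real.exp (Real.log a * k)) (Real.log a) 0 := by
      simpa using ((hasDerivAt_id (0:ℝ)).const_mul (Real.log a)).exp
    have h := hasDerivAt_iff_tendsto_slope.mp hd
    have h2 : Tendsto (fun k : ℝ => -((Real.exp (Real.log a * k) - 1) / k))
        (nhdsWithin 0 (Ioi 0)) (nhds L) := by
      refine Tendsto.neg (h.mono_left (nhdsWithin_mono _ ?_) |>.congr fun k => ?_)
      · intro x hx; simpa using ne_of_gt hx
      · simp [slope_def_field]
    refine h2.congr' ?_
    filter_upwards [self_mem_nhdsWithin] with k hk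
    rw [Real.rpow_def_of_pos ha0]; ring
  -- limit of each higher term
  have lim2 : ∀ i : ℕ, Tendsto (fun k : ℝ =>
      Real.Gamma (k + ((i:ℝ)+1)) / (((i+1).factorial : ℝ) * Real.Gamma k) * a ^ k * q ^ (i+1) / k)
      (nhdsWithin 0 (Ioi 0)) (nhds (q^(i+1)/((i:ℝ)+1))) := by
    intro i
    have hGamma : Tendsto (fun k : ℝ => Real.Gamma (k + ((i:ℝ)+1))) (nhds 0)
        (nhds (i.factorial)) := by
      have hc : ContinuousAt Real.Gamma ((i:ℝ)+1) := by
        refine (Real.differentiableAt_Gamma ?_).continuousAt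
        intro m h
        have h1 : (0:ℝ) ≤ (m:ℝ) := Nat.cast_nonneg m
        have h2 : (0:ℝ) < (i:ℝ)+1 := by positivity
        rw [h] at h2; linarith
      have h0 : Tendsto (fun k : ℝ => k + ((i:ℝ)+1)) (nhds 0) (nhds (0 + ((i:ℝ)+1))) :=
        (continuous_id.add continuous_const).tendsto 0
      rw [zero_add] at h0
      have := hc.tendsto.comp h0
      rw [Real.Gamma_nat_eq_factorial] at this
      exact this
    have hGamma1 : Tendsto (fun k : ℝ => Real.Gamma (k + 1)) (nhds 0) (nhds 1) := by
      simpa using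
        (by
          have hc : ContinuousAt Real.Gamma 1 := by
            refine (Real.differentiableAt_Gamma ?_).continuousAt
            intro m h
            have h1 : (0:ℝ) ≤ (m:ℝ) := Nat.cast_nonneg m
            have h2 : (0:ℝ) < 1 := one_pos
            rw [h] at h2; linarith
          have h0 : Tendsto (fun k : ℝ => k + (1:ℝ)) (nhds 0) (nhds (0 + 1)) :=
            (continuous_id.add continuous_const).tendsto 0
          rw [zero_add] at h0
          exact hc.tendsto.comp h0 : Tendsto (fun k : ℝ => Real.Gamma (k + 1)) (nhds 0)
            (nhds (Real.Gamma 1)))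
    have hexp : Tendsto (fun k : ℝ => a ^ k) (nhdsWithin 0 (Ioi 0)) (nhds 1) := by
      have : Tendsto (fun k : ℝ => Real.exp (Real.log a * k)) (nhds 0) (nhds 1) := by
        have hcont : Continuous fun k : ℝ => Real.exp (Real.log a * k) := by continuity
        have h1 := hcont.tendsto 0
        simpa using h1
      refine (this.mono_left nhdsWithin_le_nhds).congr' ?_
      filter_upwards [self_mem_nhdsWithin] with k hk
      rw [Real.rpow_def_of_pos ha0]
    -- combine
    have hmain : Tendsto (fun k : ℝ =>
        Real.Gamma (k + ((i:ℝ)+1)) / Real.Gamma (k + 1) * a ^ k * (q^(i+1) / ((i+1).factorial : ℝ)))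
        (nhdsWithin 0 (Ioi 0)) (nhds ((i.factorial : ℝ) / 1 * 1 * (q^(i+1) / ((i+1).factorial : ℝ)))) := by
      exact (((hGamma.mono_left nhdsWithin_le_nhds).div
        (hGamma1.mono_left nhdsWithin_le_nhds) one_ne_zero).mul hexp).mul tendsto_const_nhds
    have hval : (i.factorial : ℝ) / 1 * 1 * (q^(i+1) / ((i+1).factorial : ℝ))
        = q^(i+1)/((i:ℝ)+1) := by
      rw [Nat.factorial_succ]
      push_cast
      have h1 : (i.factorial : ℝ) ≠ 0 := by positivity
      have h2 : ((i:ℝ)+1) ≠ 0 := by positivity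
      field_simp
    rw [hval] at hmain
    refine hmain.congr' ?_
    filter_upwards [self_mem_nhdsWithin] with k hk
    have hk0 : (k:ℝ) ≠ 0 := ne_of_gt hk
    have hG : Real.Gamma k ≠ 0 := ne_of_gt (Real.Gamma_pos_of_pos hk)
    have hGk1 : Real.Gamma (k + 1) = k * Real.Gamma k := by
      rw [Real.Gamma_add_one hk0]
    have hc : (((i+1).factorial : ℝ)) ≠ 0 := by
      exact_mod_cast Nat.factorial_ne_zero _
    rw [hGk1, aux_div _ _ _ _ _ _ hc hk0 hG]
  -- limit of g x
  have hg : ∀ x : ℕ, Tendsto (fun k : ℝ =>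
      (1 - ∑ m ∈ Finset.range (x+1), ((μ k) {m}).toReal)/k)
      (nhdsWithin 0 (Ioi 0)) (nhds (L - S x)) := by
    intro x
    have hcomb : Tendsto (fun k : ℝ => (1 - a ^ k) / k -
        ∑ i ∈ Finset.range x,
          Real.Gamma (k + ((i:ℝ)+1)) / (((i+1).factorial : ℝ) * Real.Gamma k) * a ^ k * q ^ (i+1) / k)
        (nhdsWithin 0 (Ioi 0)) (nhds (L - S x)) :=
      lim1.sub (tendsto_finset_sum _ fun i _ => lim2 i)
    refine hcomb.congr' ?_
    filter_upwards [self_mem_nhdsWithin] with k hk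
    have hk0 : (k:ℝ) ≠ 0 := ne_of_gt hk
    have hG : Real.Gamma k ≠ 0 := ne_of_gt (Real.Gamma_pos_of_pos hk)
    have hμ0 : ((μ k) {0}).toReal = a ^ k := by
      rw [hμ k hk 0]
      simp [hG]
    have hμi : ∀ i : ℕ, ((μ k) {i+1}).toReal =
        Real.Gamma (k + ((i:ℝ)+1)) / (((i+1).factorial : ℝ) * Real.Gamma k) * a ^ k * q ^ (i+1) := by
      intro i
      rw [hμ k hk (i+1)]
      push_cast
      ring_nf
    rw [Finset.sum_range_succ' (fun m => ((μ k) {m}).toReal) x, hμ0,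
      Finset.sum_congr rfl (fun i _ => hμi i), ← Finset.sum_div, div_sub_div_same]
    congr 1
    ring
  -- overall limit
  have hG : Tendsto (fun k : ℝ => 1 - l * ∑ x ∈ Finset.range j,
      (1 - ∑ m ∈ Finset.range (x+1), ((μ k) {m}).toReal)/k)
      (nhdsWithin 0 (Ioi 0))
      (nhds (1 - l * ∑ x ∈ Finset.range j, (L - S x))) :=
    tendsto_const_nhds.sub ((tendsto_finset_sum _ fun x _ => hg x).const_mul l)
  have hSS : ∑ x ∈ Finset.range j, (L - S x)
      = ∑ x ∈ Finset.range j, (L - ∑ i ∈ Finset.range x, q^(i+1)/((i:ℝ)+1)) := rfl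
  rw [hSS] at hG
  refine hG.congr' ?_
  filter_upwards [self_mem_nhdsWithin] with k hk
  have hk0 : (k:ℝ) ≠ 0 := ne_of_gt hk
  rw [aux_meas_Ici (ν k) j]
  congr 1
  rw [Finset.mul_sum]
  refine Finset.sum_congr rfl fun x _ => ?_
  rw [hν k hk x]
  have hIoi : Set.Ioi x = Set.Ici (x+1) := by ext m; simp only [Set.mem_Ioi, Set.mem_Ici]; omega
  rw [hIoi, aux_meas_Ici (μ k) (x+1)]
  rw [div_div_eq_mul_div]
  ring
end
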